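/- Let p be a prime and r ∈ ℕ, and A = {1,…,p−1}. Then s_{A,≤2}(C_p^r) = 1 + (p^r − 1)/(p − 1). -/

import Mathlib

open scoped BigOperators

/-- `l` encodes a `W`-weighted zero-subsum of the sequence (multiset) `S`:
a nonempty list of (weight, group element) pairs with weights in `W`, whose
group elements form a sub-multiset of `S` and whose weighted sum is zero. -/
def IsWZeroSubsum {G : Type*} [AddCommGroup G] (W : Set ℤ) (S : Multiset G)
    (l : List (ℤ × G)) : Prop :=
  l ≠ [] ∧ (∀ p ∈ l, p.1 ∈ W) ∧ (↑(l.map Prod.snd) : Multiset G) ≤ S ∧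
    (l.map fun p => p.1 • p.2).sum = 0

/-- `S` has a `W`-weighted zero-subsum whose length lies in `L`. -/
def HasWZeroSubsumLen {G : Type*} [AddCommGroup G] (W : Set ℤ) (S : Multiset G)
    (L : Set ℕ) : Prop :=
  ∃ l : List (ℤ × G), IsWZeroSubsum W S l ∧ l.length ∈ L

/-- `S` has `m` pairwise disjoint `W`-weighted zero-subsums. -/
def HasDisjointWZeroSubsums {G : Type*} [AddCommGroup G] (W : Set ℤ) (S : Multiset G)
    (m : ℕ) : Prop :=
  ∃ ls : List (List (ℤ × G)), ls.length = m ∧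
    (∀ l ∈ ls, l ≠ [] ∧ (∀ p ∈ l, p.1 ∈ W) ∧ (l.map fun p => p.1 • p.2).sum = 0) ∧
    (↑(ls.flatten.map Prod.snd) : Multiset G) ≤ S

/-- The `m`-wise `W`-weighted Davenport constant `D_{W,m}(G)`. -/
noncomputable def DW (W : Set ℤ) (G : Type*) [AddCommGroup G] (m : ℕ) : ℕ :=
  sInf {n : ℕ | ∀ S : Multiset G, n ≤ Multiset.card S → HasDisjointWZeroSubsums W S m}

/-- The `L`-constrained `W`-weighted Davenport constant `s_{W,L}(G)`, valued in `ℕ∞`. -/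
noncomputable def sWL (W : Set ℤ) (G : Type*) [AddCommGroup G] (L : Set ℕ) : ℕ∞ :=
  sInf {N : ℕ∞ | ∃ n : ℕ, N = (n : ℕ∞) ∧
    ∀ S : Multiset G, n ≤ Multiset.card S → HasWZeroSubsumLen W S L}

/-- The `d`-constrained `W`-weighted Davenport constant `s_{W,≤d}(G)`. -/
noncomputable def sWle (W : Set ℤ) (G : Type*) [AddCommGroup G] (d : ℕ) : ℕ∞ :=
  sWL W G {t | 1 ≤ t ∧ t ≤ d}

/-- `e_W(G)`: the smallest `t ≥ 1` such that some `t` weights from `W` sum to a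
multiple of `exp(G)`. -/
noncomputable def eW (W : Set ℤ) (G : Type*) [AddCommGroup G] : ℕ :=
  sInf {t : ℕ | 1 ≤ t ∧ ∃ w : Fin t → ℤ, (∀ i, w i ∈ W) ∧
    ((AddMonoid.exponent G : ℤ) ∣ ∑ i, w i)}

/-- `W` is multiplicatively closed modulo `n`. -/
def MulClosedMod (W : Set ℤ) (n : ℕ) : Prop :=
  ∀ w ∈ W, ∀ w' ∈ W, ∃ u ∈ W, (n : ℤ) ∣ w * w' - u

open scoped LinearAlgebra.Projectivization

lemma aux_pair_le {α : Type*} {a b : α} {S : Multiset α} (ha : a ∈ S) (hb : b ∈ S)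
    (hab : a ≠ b) : (↑[a, b] : Multiset α) ≤ S := by
  obtain ⟨S', rfl⟩ := Multiset.exists_cons_of_mem ha
  have hb' : b ∈ S' := by
    rcases Multiset.mem_cons.mp hb with h | h
    · exact absurd h.symm hab
    · exact h
  have : (↑[a, b] : Multiset α) = a ::ₘ {b} := rfl
  rw [this]
  exact Multiset.cons_le_cons a (Multiset.singleton_le.mpr hb')

section Aux
variable (p : ℕ) [Fact p.Prime] (r : ℕ)

lemma aux_card_proj :
    Nat.card (ℙ (ZMod p) (Fin r → ZMod p)) * (p - 1) = p ^ r - 1 := by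
  classical
  set K := ZMod p
  set G := Fin r → ZMod p
  have key : Nat.card ((K)ˣ × ℙ K G) = Nat.card {v : G // v ≠ 0} := by
    apply Nat.card_eq_of_bijective (fun x => ⟨(x.1 : K) • x.2.rep,
      smul_ne_zero (Units.ne_zero x.1) x.2.rep_nonzero⟩)
    constructor
    · rintro ⟨c, P⟩ ⟨d, Q⟩ h
      simp only [Subtype.mk.injEq] at h
      have hPQ : P = Q := by
        have h1 : Projectivization.mk K ((c : K) • P.rep)
            (smul_ne_zero (Units.ne_zero c) P.rep_nonzero) = P := by
          conv_rhs => rw [← P.mk_rep]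
          rw [Projectivization.mk_eq_mk_iff]
          exact ⟨c, rfl⟩
        have h2 : Projectivization.mk K ((d : K) • Q.rep)
            (smul_ne_zero (Units.ne_zero d) Q.rep_nonzero) = Q := by
          conv_rhs => rw [← Q.mk_rep]
          rw [Projectivization.mk_eq_mk_iff]
          exact ⟨d, rfl⟩
        rw [← h1, ← h2]
        congr 1
      subst hPQ
      have : (c : K) = d := smul_left_injective K P.rep_nonzero (by exact h)
      rw [Prod.mk.injEq]
      exact ⟨Units.ext this, rfl⟩
    · rintro ⟨v, hv⟩
      obtain ⟨a, ha⟩ := Projectivization.exists_smul_eq_mk_rep K v hv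
      refine ⟨⟨a⁻¹, Projectivization.mk K v hv⟩, ?_⟩
      ext : 1
      simp only [← ha, Units.smul_def, smul_smul]
      simp
  rw [Nat.card_prod] at key
  have hu : Nat.card Kˣ = p - 1 := by
    rw [Nat.card_eq_fintype_card, ZMod.card_units p]
  have hv : Nat.card {v : G // v ≠ 0} = p ^ r - 1 := by
    rw [Nat.card_eq_fintype_card, Fintype.card_subtype_compl (· = 0)]
    have hG : Fintype.card G = p ^ r := by
      show Fintype.card (Fin r → ZMod p) = p ^ r
      simp [ZMod.card]
    rw [hG, Fintype.card_subtype_eq (0 : G)]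
  rw [hu, hv] at key
  rw [mul_comm]
  exact key

lemma aux_wcast_ne {w : ℤ} (hw : w ∈ Set.Icc 1 ((p : ℤ) - 1)) :
    ((w : ZMod p) : ZMod p) ≠ 0 := by
  intro h0
  rw [ZMod.intCast_zmod_eq_zero_iff_dvd] at h0
  have h2 : (2 : ℤ) ≤ p := by exact_mod_cast (Fact.out : p.Prime).two_le
  have := Int.le_of_dvd (by linarith [hw.1]) h0
  linarith [hw.2]

lemma aux_one_mem : (1 : ℤ) ∈ Set.Icc 1 ((p : ℤ) - 1) := by
  have h2 : (2 : ℤ) ≤ p := by exact_mod_cast (Fact.out : p.Prime).two_le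
  constructor <;> linarith

lemma aux_sub_zero (S : Multiset (Fin r → ZMod p)) (h0 : (0 : Fin r → ZMod p) ∈ S) :
    HasWZeroSubsumLen (Set.Icc 1 ((p : ℤ) - 1)) S {t | 1 ≤ t ∧ t ≤ 2} := by
  refine ⟨[(1, 0)], ⟨by simp, ?_, ?_, by simp⟩, by simp⟩
  · intro q hq
    simp only [List.mem_singleton] at hq
    rw [hq]
    exact aux_one_mem p
  · show ({(0 : Fin r → ZMod p)} : Multiset _) ≤ S
    exact Multiset.singleton_le.mpr h0

lemma aux_sub_pair (S : Multiset (Fin r → ZMod p)) (v w : Fin r → ZMod p) (c : ZMod p)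
    (hc : c ≠ 0) (hvw : v = c • w) (hle : (↑[v, w] : Multiset (Fin r → ZMod p)) ≤ S) :
    HasWZeroSubsumLen (Set.Icc 1 ((p : ℤ) - 1)) S {t | 1 ≤ t ∧ t ≤ 2} := by
  haveI : NeZero p := ⟨(Fact.out : p.Prime).pos.ne'⟩
  set m : ℤ := ((-c).val : ℤ) with hm
  have hcv : ((-c).val : ZMod p) = -c := ZMod.natCast_rightInverse (-c)
  have hval1 : 1 ≤ (-c).val := by
    rcases Nat.eq_zero_or_pos (-c).val with h | h
    · exact absurd ((ZMod.val_eq_zero _).mp h) (neg_ne_zero.mpr hc)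
    · exact h
  have hvalp : (-c).val < p := ZMod.val_lt _
  refine ⟨[(1, v), (m, w)], ⟨by simp, ?_, hle, ?_⟩, by simp⟩
  · intro q hq
    simp only [List.mem_cons, List.mem_singleton] at hq
    rcases hq with rfl | hq
    · exact aux_one_mem p
    · rcases hq with rfl | hq
      swap
      · exact absurd hq List.not_mem_nil
      constructor
      · show (1 : ℤ) ≤ m
        rw [hm]
        exact_mod_cast hval1
      · show m ≤ (p : ℤ) - 1
        rw [hm]
        have : ((-c).val : ℤ) < (p : ℤ) := by exact_mod_cast hvalp
        omega
  · have h1 : (1 : ℤ) • v = v := one_smul ℤ v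
    have h2 : m • w = (-c) • w := by
      rw [← Int.cast_smul_eq_zsmul (ZMod p) m w]
      congr 1
      rw [hm]
      push_cast
      exact hcv
    simp only [List.map_cons, List.map_nil, List.sum_cons, List.sum_nil, add_zero, h1, h2]
    rw [hvw, neg_smul, add_neg_cancel]

lemma aux_upper (S : Multiset (Fin r → ZMod p))
    (h : 1 + (p ^ r - 1) / (p - 1) ≤ Multiset.card S) :
    HasWZeroSubsumLen (Set.Icc 1 ((p : ℤ) - 1)) S {t | 1 ≤ t ∧ t ≤ 2} := by
  classical
  by_contra hno
  haveI : Finite (ℙ (ZMod p) (Fin r → ZMod p)) := Quotient.finite _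
  have h0 : ∀ v ∈ S, v ≠ (0 : Fin r → ZMod p) := by
    intro v hv hveq
    rw [hveq] at hv
    exact hno (aux_sub_zero p r S hv)
  have hpair : ∀ v w : Fin r → ZMod p, (↑[v, w] : Multiset (Fin r → ZMod p)) ≤ S →
      ∀ c : ZMod p, c ≠ 0 → v = c • w → False := by
    intro v w hle c hc hvw
    exact hno (aux_sub_pair p r S v w c hc hvw hle)
  have hnd : S.Nodup := by
    rw [Multiset.nodup_iff_count_le_one]
    intro a
    by_contra hcount
    push_neg at hcount
    have h2 : Multiset.replicate 2 a ≤ S :=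
      (Multiset.le_count_iff_replicate_le (n := 2)).mp (by omega)
    have heq : Multiset.replicate 2 a = (↑[a, a] : Multiset (Fin r → ZMod p)) := rfl
    rw [heq] at h2
    exact hpair a a h2 1 one_ne_zero (one_smul _ _).symm
  have hne : ∀ x : {x // x ∈ S.toFinset}, (x : Fin r → ZMod p) ≠ 0 :=
    fun x => h0 _ (Multiset.mem_toFinset.mp x.2)
  have hinj : Function.Injective
      (fun x : {x // x ∈ S.toFinset} => Projectivization.mk (ZMod p) x.1 (hne x)) := by
    intro x y hxy
    by_contra hne'
    have hxy' : x.1 ≠ y.1 := fun h => hne' (Subtype.ext h)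
    obtain ⟨c, hc⟩ := (Projectivization.mk_eq_mk_iff' (ZMod p) _ _ _ _).mp hxy
    have hc0 : c ≠ 0 := by
      rintro rfl
      rw [zero_smul] at hc
      exact hne x hc.symm
    exact hpair x.1 y.1
      (aux_pair_le (Multiset.mem_toFinset.mp x.2) (Multiset.mem_toFinset.mp y.2) hxy')
      c hc0 hc.symm
  have hle1 : Multiset.card S ≤ Nat.card (ℙ (ZMod p) (Fin r → ZMod p)) := by
    have := Nat.card_le_card_of_injective _ hinj
    rwa [Nat.card_eq_fintype_card, Fintype.card_coe,
      Multiset.toFinset_card_of_nodup hnd] at this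
  have hcard := aux_card_proj p r
  have hp2 := (Fact.out : p.Prime).two_le
  have hdiv : (p ^ r - 1) / (p - 1) = Nat.card (ℙ (ZMod p) (Fin r → ZMod p)) :=
    Nat.div_eq_of_eq_mul_left (by omega) hcard.symm
  omega

lemma aux_bad : ∃ S : Multiset (Fin r → ZMod p),
    Multiset.card S = (p ^ r - 1) / (p - 1) ∧
    ¬ HasWZeroSubsumLen (Set.Icc 1 ((p : ℤ) - 1)) S {t | 1 ≤ t ∧ t ≤ 2} := by
  classical
  haveI : Finite (ℙ (ZMod p) (Fin r → ZMod p)) := Quotient.finite _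
  haveI : Fintype (ℙ (ZMod p) (Fin r → ZMod p)) := Fintype.ofFinite _
  set S : Multiset (Fin r → ZMod p) :=
    (Finset.univ : Finset (ℙ (ZMod p) (Fin r → ZMod p))).val.map Projectivization.rep with hS
  have repinj : Function.Injective
      (Projectivization.rep : ℙ (ZMod p) (Fin r → ZMod p) → (Fin r → ZMod p)) := by
    intro P Q h
    rw [← P.mk_rep, ← Q.mk_rep, Projectivization.mk_eq_mk_iff']
    exact ⟨1, by rw [one_smul]; exact h.symm⟩
  have hnd : S.Nodup := Multiset.Nodup.map repinj Finset.univ.nodup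
  have hcard : Multiset.card S = (p ^ r - 1) / (p - 1) := by
    rw [hS, Multiset.card_map]
    show Finset.univ.card = _
    rw [Finset.card_univ, ← Nat.card_eq_fintype_card]
    exact (Nat.div_eq_of_eq_mul_left
      (by have := (Fact.out : p.Prime).two_le; omega) (aux_card_proj p r).symm).symm
  have hmem : ∀ v ∈ S, ∃ P : ℙ (ZMod p) (Fin r → ZMod p), Projectivization.rep P = v := by
    intro v hv
    rw [hS] at hv
    obtain ⟨P, _, hP⟩ := Multiset.mem_map.mp hv
    exact ⟨P, hP⟩
  refine ⟨S, hcard, ?_⟩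
  rintro ⟨l, ⟨hlne, hw, hle, hsum⟩, hlen⟩
  simp only [Set.mem_setOf_eq] at hlen
  obtain ⟨hlen1, hlen2⟩ := hlen
  rcases l with _ | ⟨a, l⟩
  · exact hlne rfl
  rcases l with _ | ⟨b, l⟩
  · -- length 1
    have hmem2 : a.2 ∈ S := Multiset.mem_of_le hle (by simp)
    obtain ⟨P, hP⟩ := hmem a.2 hmem2
    have hz : a.1 • a.2 = 0 := by simpa using hsum
    rw [← Int.cast_smul_eq_zsmul (ZMod p)] at hz
    rcases smul_eq_zero.mp hz with h | h
    · exact aux_wcast_ne p (hw a (by simp)) h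
    · exact P.rep_nonzero (hP.trans h)
  rcases l with _ | ⟨c, l⟩
  swap
  · simp at hlen2
  -- length 2 case: l = [a, b]
  have hpairle : (↑[a.2, b.2] : Multiset (Fin r → ZMod p)) ≤ S := hle
  have hab : a.2 ≠ b.2 := by
    rintro h
    have hn1 : Multiset.count b.2 S ≤ 1 := Multiset.nodup_iff_count_le_one.mp hnd b.2
    have h2' := Multiset.count_le_of_le b.2 hpairle
    rw [h] at h2'
    simp [Multiset.count_cons] at h2'
    omega
  have ha2 : a.2 ∈ S := Multiset.mem_of_le hpairle (by simp)
  have hb2 : b.2 ∈ S := Multiset.mem_of_le hpairle (by simp)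
  obtain ⟨P, hP⟩ := hmem a.2 ha2
  obtain ⟨Q, hQ⟩ := hmem b.2 hb2
  have ha0 : a.2 ≠ 0 := hP ▸ P.rep_nonzero
  have hb0 : b.2 ≠ 0 := hQ ▸ Q.rep_nonzero
  have hPQ : P ≠ Q := fun h => hab (by rw [← hP, ← hQ, h])
  have hz : a.1 • a.2 + b.1 • b.2 = 0 := by simpa using hsum
  rw [← Int.cast_smul_eq_zsmul (ZMod p) a.1, ← Int.cast_smul_eq_zsmul (ZMod p) b.1] at hz
  have hwa : ((a.1 : ZMod p)) ≠ 0 := aux_wcast_ne p (hw a (by simp))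
  have h' : (a.1 : ZMod p) • a.2 = -((b.1 : ZMod p) • b.2) := eq_neg_of_add_eq_zero_left hz
  have hsmul : a.2 = ((a.1 : ZMod p)⁻¹ * (-(b.1 : ZMod p))) • b.2 := by
    calc a.2 = (a.1 : ZMod p)⁻¹ • ((a.1 : ZMod p) • a.2) := (inv_smul_smul₀ hwa a.2).symm
      _ = (a.1 : ZMod p)⁻¹ • (-((b.1 : ZMod p) • b.2)) := by rw [h']
      _ = ((a.1 : ZMod p)⁻¹ * (-(b.1 : ZMod p))) • b.2 := by rw [← neg_smul, smul_smul]
  have hmk : Projectivization.mk (ZMod p) a.2 ha0 = Projectivization.mk (ZMod p) b.2 hb0 :=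
    (Projectivization.mk_eq_mk_iff' (ZMod p) _ _ _ _).mpr ⟨_, hsmul.symm⟩
  apply hPQ
  have hPa : P = Projectivization.mk (ZMod p) a.2 ha0 := by
    rw [← P.mk_rep, Projectivization.mk_eq_mk_iff']
    exact ⟨1, by rw [one_smul]; exact hP.symm⟩
  have hQb : Q = Projectivization.mk (ZMod p) b.2 hb0 := by
    rw [← Q.mk_rep, Projectivization.mk_eq_mk_iff']
    exact ⟨1, by rw [one_smul]; exact hQ.symm⟩
  rw [hPa, hQb, hmk]

end Aux

/-- `s_{A,≤2}(C_p^r) = 1 + (p^r - 1)/(p - 1)`. -/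
theorem stmt15 (p : ℕ) (hp : p.Prime) (r : ℕ) :
    sWle (Set.Icc 1 ((p : ℤ) - 1)) (Fin r → ZMod p) 2 =
      ((1 + (p ^ r - 1) / (p - 1) : ℕ) : ℕ∞) := by
  haveI := Fact.mk hp
  obtain ⟨S₀, hS₀card, hS₀bad⟩ := aux_bad p r
  unfold sWle sWL
  apply le_antisymm
  · exact sInf_le ⟨1 + (p ^ r - 1) / (p - 1), rfl, fun S hS => aux_upper p r S hS⟩
  · apply le_sInf
    rintro N ⟨n, rfl, hn⟩
    rw [Nat.cast_le]
    by_contra hlt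
    push_neg at hlt
    exact hS₀bad (hn S₀ (by omega))
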